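/- Let S be a 2-divisible abelian semigroup (for every x ∈ S there exists y ∈ S with y + y = x, and such y is unique, so x/2^k is defined for all k), B a Banach space, n a positive integer, φ : S^{n+1} → [0, ∞) satisfying Σ_{k=0}^∞ 2^{nk} φ(2^{-k-1} z) < ∞ for every z ∈ S^{n+1}, and let g : S^n → B be a symmetric function satisfying ‖D_n g(z)‖ ≤ φ(z) for all z ∈ S^{n+1}. Let Φ : S^n → [0, ∞) be any function such that Φ(y) ≥ R_n^- φ(y) and lim_{k→∞} 2^{nk} Φ(2^{-k} y) = 0 for all y ∈ S^n. Then the limit a(y) := lim_{k→∞} 2^{nk} g(2^{-k} y) exists for every y ∈ S^n, a : S^n → B is a symmetric n-additive function satisfying ‖g(y) − a(y)‖ ≤ Φ(y) for all y ∈ S^n, and a is the unique symmetric n-additive function with this property. -/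

import Mathlib

/-- The Cauchy difference operator `D_n` for a function of `n = m + 1` variables. -/
def Dop {S B : Type*} [AddCommSemigroup S] [AddCommGroup B] (m : ℕ)
    (g : (Fin (m + 1) → S) → B) (z : Fin (m + 2) → S) : B :=
  g (Function.update (fun i : Fin (m + 1) => z i.castSucc) (Fin.last m)
      (z (Fin.castSucc (Fin.last m)) + z (Fin.last (m + 1))))
    - g (fun i : Fin (m + 1) => z i.castSucc)
    - g (Function.update (fun i : Fin (m + 1) => z i.castSucc) (Fin.last m)
      (z (Fin.last (m + 1))))

/-- The operator `r_n` for `n = m + 1`: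
`r_n φ (x₁, …, x_n) = ∑_{j=1}^{n} 2^{j-1} φ(2x₁, …, 2x_{n-j}, x_n, x_{n-1}, …,
x_{n-j+1}, x_{n-j+1})` (indexed by `j = jj + 1`, tuples are `0`-indexed). -/
def rop {S : Type*} [AddCommSemigroup S] (m : ℕ)
    (φ : (Fin (m + 2) → S) → ℝ) (y : Fin (m + 1) → S) : ℝ :=
  ∑ jj ∈ Finset.range (m + 1), 2 ^ jj *
    φ (fun i : Fin (m + 2) =>
      if h1 : (i : ℕ) < m - jj then y ⟨i, by omega⟩ + y ⟨i, by omega⟩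
      else if h2 : m ≤ (i : ℕ) then y ⟨m - jj, by omega⟩
      else y ⟨2 * m - jj - i, by omega⟩)

def cyc (m j : ℕ) : Equiv.Perm (Fin (m + 1)) where
  toFun i := ⟨if (i : ℕ) < m - j then i else if (i : ℕ) = m then m - j else i + 1,
    by have := i.isLt; split_ifs <;> omega⟩
  invFun i := ⟨if (i : ℕ) < m - j then i else if (i : ℕ) = m - j then m else i - 1,
    by have := i.isLt; split_ifs <;> omega⟩
  left_inv i := by
    have := i.isLt
    apply Fin.ext
    simp only []
    split_ifs <;> omega
  right_inv i := by
    have := i.isLt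
    apply Fin.ext
    simp only []
    split_ifs <;> omega

theorem key_est {S B : Type*} [AddCommSemigroup S] [NormedAddCommGroup B] [NormedSpace ℝ B]
    (m : ℕ) (φ : (Fin (m + 2) → S) → ℝ)
    (g : (Fin (m + 1) → S) → B)
    (hgsym : ∀ (x : Fin (m + 1) → S) (σ : Equiv.Perm (Fin (m + 1))), g (x ∘ σ) = g x)
    (hgD : ∀ z, ‖Dop m g z‖ ≤ φ z) (x : Fin (m + 1) → S) :
    ‖g (fun i => x i + x i) - ((2 : ℝ) ^ (m + 1)) • g x‖ ≤ rop m φ x := by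
  set T : ℕ → Fin (m + 1) → S := fun j i =>
    if (i : ℕ) < m + 1 - j then x i + x i else x ⟨min m (2 * m + 1 - j - (i : ℕ)), by omega⟩
    with hT
  set U : ℕ → Fin (m + 2) → S := fun j i =>
    if h1 : (i : ℕ) < m - j then x ⟨i, by omega⟩ + x ⟨i, by omega⟩
    else if h2 : m ≤ (i : ℕ) then x ⟨m - j, by omega⟩
    else x ⟨2 * m - j - i, by omega⟩
    with hU
  have hstep : ∀ j : ℕ, j ≤ m → ‖g (T j) - (2 : ℝ) • g (T (j + 1))‖ ≤ φ (U j) := by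
    intro j hj
    have e1 : (fun i : Fin (m + 1) => U j i.castSucc) = T (j + 1) := by
      funext i
      have := i.isLt
      simp only [hU, hT, Fin.coe_castSucc]
      split_ifs
      any_goals rfl
      any_goals (exfalso; omega)
      all_goals (try (refine congrArg x (Fin.ext ?_); simp only [Fin.val_mk]; omega))
      all_goals
        (refine congrArg₂ (· + ·) (congrArg x (Fin.ext ?_)) (congrArg x (Fin.ext ?_)) <;>
          simp only [Fin.val_mk] <;> omega)
    have e2 : Function.update (fun i : Fin (m + 1) => U j i.castSucc) (Fin.last m)
        (U j (Fin.castSucc (Fin.last m)) + U j (Fin.last (m + 1))) = T j ∘ ⇑(cyc m j) := by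
      funext i
      have := i.isLt
      simp only [Function.update_apply, hU, hT, Fin.coe_castSucc, Function.comp_apply, cyc,
        Equiv.coe_fn_mk, Fin.ext_iff, Fin.val_last, Fin.val_mk]
      split_ifs
      any_goals rfl
      any_goals (exfalso; omega)
      all_goals (try (refine congrArg x (Fin.ext ?_); simp only [Fin.val_mk]; omega))
      all_goals
        (refine congrArg₂ (· + ·) (congrArg x (Fin.ext ?_)) (congrArg x (Fin.ext ?_)) <;>
          simp only [Fin.val_mk] <;> omega)
    have e3 : Function.update (fun i : Fin (m + 1) => U j i.castSucc) (Fin.last m)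
        (U j (Fin.last (m + 1))) = T (j + 1) := by
      funext i
      have := i.isLt
      simp only [Function.update_apply, hU, hT, Fin.coe_castSucc, Fin.ext_iff, Fin.val_last,
        Fin.val_mk]
      split_ifs
      any_goals rfl
      any_goals (exfalso; omega)
      all_goals (try (refine congrArg x (Fin.ext ?_); simp only [Fin.val_mk]; omega))
      all_goals
        (refine congrArg₂ (· + ·) (congrArg x (Fin.ext ?_)) (congrArg x (Fin.ext ?_)) <;>
          simp only [Fin.val_mk] <;> omega)
    have hD := hgD (U j)
    rw [Dop, e2, e3, e1, hgsym (T j) (cyc m j)] at hD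
    calc ‖g (T j) - (2 : ℝ) • g (T (j + 1))‖
        = ‖g (T j) - g (T (j + 1)) - g (T (j + 1))‖ := by
          rw [sub_sub, two_smul]
      _ ≤ φ (U j) := hD
  have htel : ∀ J : ℕ, J ≤ m + 1 →
      ‖g (T 0) - ((2 : ℝ) ^ J) • g (T J)‖ ≤ ∑ j ∈ Finset.range J, 2 ^ j * φ (U j) := by
    intro J
    induction J with
    | zero => intro _; simp
    | succ J ih =>
      intro hJ
      have h1 := ih (by omega)
      have h2 := hstep J (by omega)
      have tri := norm_add_le (g (T 0) - ((2 : ℝ) ^ J) • g (T J))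
        (((2 : ℝ) ^ J) • g (T J) - ((2 : ℝ) ^ (J + 1)) • g (T (J + 1)))
      rw [sub_add_sub_cancel] at tri
      have h3 : ‖((2 : ℝ) ^ J) • g (T J) - ((2 : ℝ) ^ (J + 1)) • g (T (J + 1))‖
          = 2 ^ J * ‖g (T J) - (2 : ℝ) • g (T (J + 1))‖ := by
        rw [pow_succ, mul_smul, ← smul_sub, norm_smul, Real.norm_eq_abs,
          abs_of_nonneg (by positivity : (0:ℝ) ≤ 2 ^ J)]
      have h4 : (2 : ℝ) ^ J * ‖g (T J) - (2 : ℝ) • g (T (J + 1))‖ ≤ 2 ^ J * φ (U J) := by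
        have : (0:ℝ) ≤ 2 ^ J := by positivity
        exact mul_le_mul_of_nonneg_left h2 this
      rw [Finset.sum_range_succ]
      linarith [tri, h1, h3, h4]
  have hT0 : T 0 = fun i => x i + x i := by
    funext i
    have := i.isLt
    simp only [hT]
    rw [if_pos (by omega)]
  have hTm : g (T (m + 1)) = g x := by
    have hrev : T (m + 1) = x ∘ ⇑(Fin.revPerm) := by
      funext i
      have := i.isLt
      simp only [hT, Function.comp_apply, Fin.revPerm_apply]
      rw [if_neg (by omega)]
      refine congrArg x (Fin.ext ?_)
      simp only [Fin.val_mk, Fin.val_rev]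
      omega
    rw [hrev, hgsym x Fin.revPerm]
  have hrop : rop m φ x = ∑ j ∈ Finset.range (m + 1), 2 ^ j * φ (U j) := by
    simp only [rop, hU]
  calc ‖g (fun i => x i + x i) - ((2 : ℝ) ^ (m + 1)) • g x‖
      = ‖g (T 0) - ((2 : ℝ) ^ (m + 1)) • g (T (m + 1))‖ := by rw [hT0, hTm]
    _ ≤ ∑ j ∈ Finset.range (m + 1), 2 ^ j * φ (U j) := htel (m + 1) le_rfl
    _ = rop m φ x := hrop.symm

/-- **Theorem 2.2 (2).** Let `S` be a uniquely `2`-divisible abelian semigroup (with halving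
map `half`), `B` a Banach space, `n = m + 1 ≥ 1`, `φ : Sⁿ⁺¹ → [0,∞)` with
`∑ₖ 2^{nk} φ(2^{-k-1} z) < ∞`, and `g : Sⁿ → B` symmetric with `‖D_n g z‖ ≤ φ z`.
If `Φ : Sⁿ → [0,∞)` satisfies `Φ y ≥ R_n⁻ φ y` and `2^{nk} Φ(2^{-k} y) → 0`, then
`a y := lim 2^{nk} g(2^{-k} y)` exists, is symmetric and `n`-additive, satisfies
`‖g y - a y‖ ≤ Φ y`, and is the unique such symmetric `n`-additive map.
(Here `2^{-k} x = half^[k] x`.) -/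
theorem stmt5 {S B : Type*} [AddCommSemigroup S] [NormedAddCommGroup B]
    [NormedSpace ℝ B] [CompleteSpace B]
    (half : S → S) (hhalf : ∀ x : S, half x + half x = x)
    (hhalfuniq : ∀ x u : S, u + u = x → u = half x)
    (m : ℕ) (φ : (Fin (m + 2) → S) → ℝ) (hφ0 : ∀ z, 0 ≤ φ z)
    (hφsum : ∀ z : Fin (m + 2) → S,
      Summable fun k : ℕ =>
        (2 : ℝ) ^ ((m + 1) * k) * φ (fun i => half^[k + 1] (z i)))
    (g : (Fin (m + 1) → S) → B)
    (hgsym : ∀ (x : Fin (m + 1) → S) (σ : Equiv.Perm (Fin (m + 1))), g (x ∘ σ) = g x)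
    (hgD : ∀ z, ‖Dop m g z‖ ≤ φ z)
    (Φ : (Fin (m + 1) → S) → ℝ) (hΦ0 : ∀ y, 0 ≤ Φ y)
    (hΦR : ∀ y : Fin (m + 1) → S,
      (∑' k : ℕ, (2 : ℝ) ^ ((m + 1) * k) * rop m φ (fun i => half^[k + 1] (y i))) ≤ Φ y)
    (hΦlim : ∀ y : Fin (m + 1) → S,
      Filter.Tendsto (fun k : ℕ => (2 : ℝ) ^ ((m + 1) * k) * Φ (fun i => half^[k] (y i)))
        Filter.atTop (nhds 0)) :
    ∃ a : (Fin (m + 1) → S) → B,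
      (∀ y : Fin (m + 1) → S,
        Filter.Tendsto
          (fun k : ℕ => ((2 : ℝ) ^ ((m + 1) * k)) • g (fun i => half^[k] (y i)))
          Filter.atTop (nhds (a y))) ∧
      (∀ (x : Fin (m + 1) → S) (σ : Equiv.Perm (Fin (m + 1))), a (x ∘ σ) = a x) ∧
      (∀ (x : Fin (m + 1) → S) (i : Fin (m + 1)) (u v : S),
        a (Function.update x i (u + v)) = a (Function.update x i u) + a (Function.update x i v)) ∧
      (∀ y, ‖g y - a y‖ ≤ Φ y) ∧
      (∀ a' : (Fin (m + 1) → S) → B,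
        (∀ (x : Fin (m + 1) → S) (σ : Equiv.Perm (Fin (m + 1))), a' (x ∘ σ) = a' x) →
        (∀ (x : Fin (m + 1) → S) (i : Fin (m + 1)) (u v : S),
          a' (Function.update x i (u + v))
            = a' (Function.update x i u) + a' (Function.update x i v)) →
        (∀ y, ‖g y - a' y‖ ≤ Φ y) → a' = a) := by
  classical
  open Filter in
  have hhalf_add : ∀ a b : S, half (a + b) = half a + half b := fun a b =>
    (hhalfuniq (a + b) (half a + half b) (by rw [add_add_add_comm, hhalf, hhalf])).symm
  have hhalf2 : ∀ a : S, half (a + a) = a := fun a => (hhalfuniq (a + a) a rfl).symm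
  have hiter_add : ∀ (k : ℕ) (a b : S), half^[k] (a + b) = half^[k] a + half^[k] b := by
    intro k
    induction k with
    | zero => intro a b; rfl
    | succ k ih => intro a b; simp only [Function.iterate_succ_apply, hhalf_add, ih]
  have hiter2 : ∀ (k : ℕ) (a : S), half^[k + 1] a + half^[k + 1] a = half^[k] a := by
    intro k a
    rw [Function.iterate_succ_apply', hhalf]
  set b : (Fin (m + 1) → S) → ℕ → B :=
    fun y k => ((2 : ℝ) ^ ((m + 1) * k)) • g (fun i => half^[k] (y i)) with hb
  set ψ : (Fin (m + 1) → S) → ℕ → ℝ :=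
    fun y k => (2 : ℝ) ^ ((m + 1) * k) * rop m φ (fun i => half^[k + 1] (y i)) with hψ
  set Z : (Fin (m + 1) → S) → ℕ → Fin (m + 2) → S := fun y jj i =>
    if h1 : (i : ℕ) < m - jj then y ⟨i, by omega⟩ + y ⟨i, by omega⟩
    else if h2 : m ≤ (i : ℕ) then y ⟨m - jj, by omega⟩
    else y ⟨2 * m - jj - i, by omega⟩ with hZ
  have hbdiff : ∀ y k, ‖b y k - b y (k + 1)‖ ≤ ψ y k := by
    intro y k
    have hkey := key_est m φ g hgsym hgD (fun i => half^[k + 1] (y i))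
    have hxx : (fun i => half^[k + 1] (y i) + half^[k + 1] (y i))
        = fun i => half^[k] (y i) := by
      funext i; exact hiter2 k (y i)
    rw [hxx] at hkey
    have hrw : b y k - b y (k + 1) = ((2 : ℝ) ^ ((m + 1) * k)) •
        (g (fun i => half^[k] (y i))
          - ((2 : ℝ) ^ (m + 1)) • g (fun i => half^[k + 1] (y i))) := by
      rw [smul_sub, smul_smul, ← pow_add, hb]
      have : (m + 1) * k + (m + 1) = (m + 1) * (k + 1) := by ring
      rw [this]
    rw [hrw, norm_smul, Real.norm_eq_abs, abs_of_nonneg (by positivity)]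
    exact mul_le_mul_of_nonneg_left hkey (by positivity)
  have hropE : ∀ (y : Fin (m + 1) → S) (k : ℕ),
      rop m φ (fun i => half^[k + 1] (y i))
        = ∑ jj ∈ Finset.range (m + 1),
            (2 : ℝ) ^ jj * φ (fun i => half^[k + 1] (Z y jj i)) := by
    intro y k
    rw [rop]
    refine Finset.sum_congr rfl fun jj _ => ?_
    congr 1
    congr 1
    funext i
    rw [hZ]
    dsimp only
    split_ifs with h1 h2
    · exact (hiter_add (k + 1) _ _).symm
    · rfl
    · rfl
  have hψsum : ∀ y, Summable (ψ y) := by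
    intro y
    refine Summable.congr (f := fun k => ∑ jj ∈ Finset.range (m + 1),
      (2 : ℝ) ^ jj * ((2 : ℝ) ^ ((m + 1) * k) * φ (fun i => half^[k + 1] (Z y jj i)))) ?_ ?_
    · exact summable_sum fun jj _ => (hφsum (Z y jj)).mul_left _
    · intro k
      rw [hψ]
      dsimp only
      rw [hropE y k, Finset.mul_sum]
      exact (Finset.sum_congr rfl fun jj _ => by ring).symm
  have hcs : ∀ y, Summable (fun k => b y (k + 1) - b y k) := by
    intro y
    refine Summable.of_norm_bounded (hψsum y) fun k => ?_
    rw [norm_sub_rev]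
    exact hbdiff y k
  set a : (Fin (m + 1) → S) → B :=
    fun y => g y + ∑' k, (b y (k + 1) - b y k) with haD
  have hb0 : ∀ y, b y 0 = g y := by
    intro y
    simp [hb]
  have ha : ∀ y, Filter.Tendsto (fun k => b y k) Filter.atTop (nhds (a y)) := by
    intro y
    have ht := (hcs y).hasSum.tendsto_sum_nat
    have ht2 : Filter.Tendsto (fun K => b y K - b y 0) Filter.atTop
        (nhds (∑' k, (b y (k + 1) - b y k))) :=
      Filter.Tendsto.congr (fun K => Finset.sum_range_sub (b y) K) ht
    have ht3 := ht2.add (tendsto_const_nhds (x := b y 0))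
    simp only [sub_add_cancel] at ht3
    have hay : a y = (∑' k, (b y (k + 1) - b y k)) + b y 0 := by
      rw [haD, hb0 y]; dsimp only; rw [add_comm]
    rw [hay]
    exact ht3
  have hga : ∀ y, ‖g y - a y‖ ≤ Φ y := by
    intro y
    have h0 : g y - a y = -(∑' k, (b y (k + 1) - b y k)) := by
      rw [haD]; dsimp only; abel
    rw [h0, norm_neg]
    have hnorm : Summable (fun k => ‖b y (k + 1) - b y k‖) :=
      Summable.of_nonneg_of_le (fun k => norm_nonneg _)
        (fun k => by rw [norm_sub_rev]; exact hbdiff y k) (hψsum y)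
    calc ‖∑' k, (b y (k + 1) - b y k)‖ ≤ ∑' k, ‖b y (k + 1) - b y k‖ :=
          norm_tsum_le_tsum_norm hnorm
      _ ≤ ∑' k, ψ y k :=
          Summable.tsum_le_tsum (fun k => by rw [norm_sub_rev]; exact hbdiff y k) hnorm (hψsum y)
      _ ≤ Φ y := by
          have := hΦR y
          rw [hψ]
          exact this
  have hφ0lim : ∀ z : Fin (m + 2) → S, Filter.Tendsto
      (fun k => (2 : ℝ) ^ ((m + 1) * k) * φ (fun i => half^[k] (z i)))
      Filter.atTop (nhds 0) := by
    intro z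
    have hs := hφsum (fun i => z i + z i)
    have he : ∀ k : ℕ, (fun i => half^[k + 1] (z i + z i)) = fun i => half^[k] (z i) := by
      intro k; funext i; rw [Function.iterate_succ_apply, hhalf2]
    exact (hs.congr fun k => by rw [he k]).tendsto_atTop_zero
  have hupd : ∀ (f : Fin (m + 1) → S) (p : Fin (m + 1)) (v : S) (k : ℕ),
      (fun j => half^[k] (Function.update f p v j))
        = Function.update (fun j => half^[k] (f j)) p (half^[k] v) := by
    intro f p v k
    funext j
    exact Function.apply_update (fun _ s => half^[k] s) f p v j
  have hasym : ∀ (x : Fin (m + 1) → S) (σ : Equiv.Perm (Fin (m + 1))), a (x ∘ σ) = a x := by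
    intro x σ
    refine tendsto_nhds_unique (ha (x ∘ σ)) ((ha x).congr fun k => ?_)
    rw [hb]
    dsimp only
    congr 1
    exact (hgsym (fun i => half^[k] (x i)) σ).symm
  have hDa : ∀ z : Fin (m + 2) → S, Dop m a z = 0 := by
    intro z
    have hT1 : Filter.Tendsto (fun k =>
        b (Function.update (fun i : Fin (m + 1) => z i.castSucc) (Fin.last m)
            (z (Fin.castSucc (Fin.last m)) + z (Fin.last (m + 1)))) k
        - b (fun i : Fin (m + 1) => z i.castSucc) k
        - b (Function.update (fun i : Fin (m + 1) => z i.castSucc) (Fin.last m)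
            (z (Fin.last (m + 1)))) k) Filter.atTop (nhds (Dop m a z)) := by
      rw [Dop]
      exact ((ha _).sub (ha _)).sub (ha _)
    have heq : ∀ k, (b (Function.update (fun i : Fin (m + 1) => z i.castSucc) (Fin.last m)
            (z (Fin.castSucc (Fin.last m)) + z (Fin.last (m + 1)))) k
        - b (fun i : Fin (m + 1) => z i.castSucc) k
        - b (Function.update (fun i : Fin (m + 1) => z i.castSucc) (Fin.last m)
            (z (Fin.last (m + 1)))) k)
        = ((2 : ℝ) ^ ((m + 1) * k)) • Dop m g (fun i => half^[k] (z i)) := by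
      intro k
      have e1 : (fun j => half^[k] ((Function.update (fun i : Fin (m + 1) => z i.castSucc)
          (Fin.last m) (z (Fin.castSucc (Fin.last m)) + z (Fin.last (m + 1)))) j))
          = Function.update (fun j : Fin (m + 1) => half^[k] (z j.castSucc)) (Fin.last m)
            (half^[k] (z (Fin.castSucc (Fin.last m))) + half^[k] (z (Fin.last (m + 1)))) := by
        rw [hupd, hiter_add]
      have e3 : (fun j => half^[k] ((Function.update (fun i : Fin (m + 1) => z i.castSucc)
          (Fin.last m) (z (Fin.last (m + 1)))) j))
          = Function.update (fun j : Fin (m + 1) => half^[k] (z j.castSucc)) (Fin.last m)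
            (half^[k] (z (Fin.last (m + 1)))) := by
        rw [hupd]
      simp only [hb, Dop, smul_sub]
      rw [e1, e3]
    have hT2 : Filter.Tendsto (fun k =>
        b (Function.update (fun i : Fin (m + 1) => z i.castSucc) (Fin.last m)
            (z (Fin.castSucc (Fin.last m)) + z (Fin.last (m + 1)))) k
        - b (fun i : Fin (m + 1) => z i.castSucc) k
        - b (Function.update (fun i : Fin (m + 1) => z i.castSucc) (Fin.last m)
            (z (Fin.last (m + 1)))) k) Filter.atTop (nhds 0) := by
      refine squeeze_zero_norm (fun k => ?_) (hφ0lim z)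
      rw [heq k, norm_smul, Real.norm_eq_abs, abs_of_nonneg (by positivity)]
      exact mul_le_mul_of_nonneg_left (hgD _) (by positivity)
    exact tendsto_nhds_unique hT1 hT2
  have haddlast : ∀ (w : Fin (m + 1) → S) (u v : S),
      a (Function.update w (Fin.last m) (u + v))
        = a (Function.update w (Fin.last m) u) + a (Function.update w (Fin.last m) v) := by
    intro w u v
    have h := hDa (Fin.snoc (Function.update w (Fin.last m) u) v)
    rw [Dop] at h
    simp only [Fin.snoc_castSucc, Fin.snoc_last, Function.update_idem, Function.update_self] at h
    rw [sub_sub, sub_eq_zero] at h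
    exact h
  have hadd : ∀ (x : Fin (m + 1) → S) (i : Fin (m + 1)) (u v : S),
      a (Function.update x i (u + v))
        = a (Function.update x i u) + a (Function.update x i v) := by
    intro x i u v
    have hsw : ∀ t : S, a (Function.update x i t)
        = a (Function.update (x ∘ (Equiv.swap i (Fin.last m))) (Fin.last m) t) := by
      intro t
      have h1 : Function.update x i t ∘ (Equiv.swap i (Fin.last m))
          = Function.update (x ∘ (Equiv.swap i (Fin.last m))) (Fin.last m) t := by
        rw [Function.update_comp_equiv]
        congr 1
        rw [Equiv.symm_swap, Equiv.swap_apply_left]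
      rw [← h1, hasym]
    calc a (Function.update x i (u + v))
        = a (Function.update (x ∘ (Equiv.swap i (Fin.last m))) (Fin.last m) (u + v)) := hsw _
      _ = a (Function.update (x ∘ (Equiv.swap i (Fin.last m))) (Fin.last m) u)
          + a (Function.update (x ∘ (Equiv.swap i (Fin.last m))) (Fin.last m) v) :=
            haddlast _ u v
      _ = a (Function.update x i u) + a (Function.update x i v) := by
          rw [← hsw u, ← hsw v]
  refine ⟨a, fun y => ha y, hasym, hadd, hga, ?_⟩
  intro a' hsym' hadd' hb'
  funext y
  have hdbl : ∀ x : Fin (m + 1) → S, a' (fun i => x i + x i) = ((2 : ℝ) ^ (m + 1)) • a' x := by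
    intro x
    set P : ℕ → Fin (m + 1) → S := fun J i => if (i : ℕ) < J then x i else x i + x i with hP
    have hPstep : ∀ J : ℕ, J ≤ m → a' (P J) = (2 : ℝ) • a' (P (J + 1)) := by
      intro J hJ
      have e1 : P J = Function.update (P (J + 1)) ⟨J, by omega⟩
          (x ⟨J, by omega⟩ + x ⟨J, by omega⟩) := by
        funext i
        rw [Function.update_apply]
        split_ifs with h
        · rw [h, hP]
          dsimp only
          rw [if_neg (by simp)]
        · rw [hP]
          dsimp only
          have hne : (i : ℕ) ≠ J := fun hc => h (Fin.ext hc)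
          split_ifs <;> first | rfl | omega
      have e2 : P (J + 1) = Function.update (P (J + 1)) ⟨J, by omega⟩ (x ⟨J, by omega⟩) := by
        funext i
        rw [Function.update_apply]
        split_ifs with h
        · rw [h, hP]
          dsimp only
          rw [if_pos (by simp)]
        · rfl
      rw [e1, hadd' (P (J + 1)) ⟨J, by omega⟩ (x ⟨J, by omega⟩) (x ⟨J, by omega⟩), ← e2,
        two_smul]
    have hPiter : ∀ J : ℕ, J ≤ m + 1 → a' (P 0) = ((2 : ℝ) ^ J) • a' (P J) := by
      intro J
      induction J with
      | zero => intro _; simp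
      | succ J ih =>
        intro hJ
        rw [ih (by omega), hPstep J (by omega), smul_smul, pow_succ]
    have hP0 : P 0 = fun i => x i + x i := by
      funext i
      rw [hP]
      dsimp only
      rw [if_neg (by omega)]
    have hPm : P (m + 1) = x := by
      funext i
      rw [hP]
      dsimp only
      rw [if_pos i.isLt]
    rw [← hP0, ← hPm]
    exact hPiter (m + 1) le_rfl
  have hscale : ∀ (y : Fin (m + 1) → S) (k : ℕ),
      a' y = ((2 : ℝ) ^ ((m + 1) * k)) • a' (fun i => half^[k] (y i)) := by
    intro y k
    induction k with
    | zero => simp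
    | succ k ih =>
      have h1 : (fun i => half^[k] (y i))
          = fun i => half^[k + 1] (y i) + half^[k + 1] (y i) := by
        funext i; exact (hiter2 k (y i)).symm
      have h2 : (m + 1) * k + (m + 1) = (m + 1) * (k + 1) := by ring
      rw [ih, h1, hdbl (fun i => half^[k + 1] (y i)), smul_smul, ← pow_add, h2]
  have hT : Filter.Tendsto (fun k => b y k) Filter.atTop (nhds (a' y)) := by
    rw [tendsto_iff_norm_sub_tendsto_zero]
    refine squeeze_zero (fun k => norm_nonneg _) (fun k => ?_) (hΦlim y)
    rw [hscale y k, hb]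
    dsimp only
    rw [← smul_sub, norm_smul, Real.norm_eq_abs, abs_of_nonneg (by positivity)]
    exact mul_le_mul_of_nonneg_left (hb' _) (by positivity)
  exact tendsto_nhds_unique hT (ha y)
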